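/- For a substochastic upper bidiagonal matrix T with diagonal entries 2^{i−1}/2^h (i = 1,…,h) and superdiagonal entries 1 − 2^{i−1}/2^h, the matrix I − T is invertible and the first row sum of (I − T)^{−1} equals ∑_{i=1}^{h} 2^i/(2^i − 1). -/

import Mathlib

/-- For the substochastic upper bidiagonal `h×h` matrix `T` with diagonal entries
`2^{i-1}/2^h` and superdiagonal entries `1 - 2^{i-1}/2^h`, the matrix `I - T` is
invertible and the first row sum of `(I - T)⁻¹` equals `∑_{i=1}^h 2^i/(2^i - 1)`. -/
theorem fundamental_matrix_first_row_sum
    (h : ℕ) (hh : 0 < h)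
    (T : Matrix (Fin h) (Fin h) ℝ)
    (hT : ∀ i j : Fin h, T i j =
      if j = i then (2 : ℝ) ^ (i : ℕ) / 2 ^ h
      else if (j : ℕ) = (i : ℕ) + 1 then 1 - (2 : ℝ) ^ (i : ℕ) / 2 ^ h
      else 0) :
    IsUnit (1 - T) ∧
      ∑ j : Fin h, (1 - T)⁻¹ ⟨0, hh⟩ j
        = ∑ i ∈ Finset.range h, (2 : ℝ) ^ (i + 1) / (2 ^ (i + 1) - 1) := by
  set d : Fin h → ℝ := fun i => 1 - (2 : ℝ) ^ (i : ℕ) / 2 ^ h with hd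
  have h2h : (0:ℝ) < 2 ^ h := by positivity
  have hdpos : ∀ j : Fin h, 0 < d j := by
    intro j
    have : (2:ℝ) ^ (j : ℕ) < 2 ^ h := by
      exact pow_lt_pow_right₀ (by norm_num) j.isLt
    have : (2:ℝ) ^ (j : ℕ) / 2 ^ h < 1 := (div_lt_one h2h).2 this
    simp [hd]
    linarith
  have hdne : ∀ j : Fin h, d j ≠ 0 := fun j => (hdpos j).ne'
  set A : Matrix (Fin h) (Fin h) ℝ :=
    Matrix.of (fun i j => if (i : ℕ) ≤ (j : ℕ) then (d j)⁻¹ else 0) with hA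
  -- entries of 1 - T
  have hM : ∀ i k : Fin h, (1 - T) i k =
      (if k = i then d i else 0) + (if (k : ℕ) = (i : ℕ) + 1 then -d i else 0) := by
    intro i k
    have : (1 - T) i k = (if k = i then (1:ℝ) else 0) - T i k := by
      simp [Matrix.sub_apply, Matrix.one_apply, eq_comm]
    rw [this, hT]
    by_cases hk : k = i
    · subst hk
      simp [hd]
    · have hk' : (k : ℕ) ≠ (i : ℕ) := fun e => hk (Fin.ext e)
      by_cases hk2 : (k : ℕ) = (i : ℕ) + 1
      · simp [hk, hk2, hd]
      · simp [hk, hk2]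
  have hMA : (1 - T) * A = 1 := by
    ext i j
    rw [Matrix.mul_apply]
    have hsum : ∑ k, (1 - T) i k * A k j
        = (∑ k, (if k = i then d i else 0) * A k j)
          + ∑ k : Fin h, (if (k : ℕ) = (i : ℕ) + 1 then -d i else 0) * A k j := by
      rw [← Finset.sum_add_distrib]
      refine Finset.sum_congr rfl fun k _ => ?_
      rw [hM]; ring
    rw [hsum]
    have h1 : (∑ k, (if k = i then d i else 0) * A k j) = d i * A i j := by
      rw [Finset.sum_eq_single i]
      · simp
      · intro k _ hk; simp [hk]
      · simp
    rw [h1]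
    by_cases hi : (i : ℕ) + 1 < h
    · set i' : Fin h := ⟨(i : ℕ) + 1, hi⟩ with hi'
      have h2 : (∑ k : Fin h, (if (k : ℕ) = (i : ℕ) + 1 then -d i else 0) * A k j)
          = -d i * A i' j := by
        rw [Finset.sum_eq_single i']
        · simp [hi']
        · intro k _ hk
          have : (k : ℕ) ≠ (i : ℕ) + 1 := by
            intro e; exact hk (Fin.ext (by simp [hi', e]))
          simp [this]
        · simp
      rw [h2]
      by_cases hij : i = j
      · subst hij
        have e2 : ¬ ((i' : ℕ) ≤ (i : ℕ)) := by simp [hi']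
        rw [hA]
        simp only [Matrix.of_apply]
        rw [if_pos (le_refl (i : ℕ)), if_neg e2, Matrix.one_apply_eq,
          mul_zero, add_zero, mul_inv_cancel₀ (hdne i)]
      · rcases lt_or_gt_of_ne (fun e : (i:ℕ) = (j:ℕ) => hij (Fin.ext e)) with hlt | hgt
        · have e1 : (i : ℕ) ≤ (j : ℕ) := hlt.le
          have e2 : (i' : ℕ) ≤ (j : ℕ) := hlt
          rw [hA]
          simp only [Matrix.of_apply]
          rw [if_pos e1, if_pos e2, Matrix.one_apply_ne hij]
          ring
        · have e1 : ¬ ((i : ℕ) ≤ (j : ℕ)) := by omega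
          have e2 : ¬ ((i' : ℕ) ≤ (j : ℕ)) := by simp [hi']; omega
          rw [hA]
          simp only [Matrix.of_apply]
          rw [if_neg e1, if_neg e2, Matrix.one_apply_ne hij]
          ring
    · have h2 : (∑ k : Fin h, (if (k : ℕ) = (i : ℕ) + 1 then -d i else 0) * A k j) = 0 := by
        refine Finset.sum_eq_zero fun k _ => ?_
        have : (k : ℕ) ≠ (i : ℕ) + 1 := by have := k.isLt; omega
        simp [this]
      rw [h2, add_zero]
      by_cases hij : i = j
      · subst hij
        rw [hA]
        simp only [Matrix.of_apply]
        rw [if_pos (le_refl (i : ℕ)), Matrix.one_apply_eq, mul_inv_cancel₀ (hdne i)]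
      · have hji : ¬ ((i : ℕ) ≤ (j : ℕ)) := by
          have := j.isLt
          intro hle
          exact hij (Fin.ext (by omega))
        rw [hA]
        simp only [Matrix.of_apply]
        rw [if_neg hji, Matrix.one_apply_ne hij, mul_zero]
  have hAM : A * (1 - T) = 1 := mul_eq_one_comm.mp hMA
  have hUnit : IsUnit (1 - T) := ⟨⟨1 - T, A, hMA, hAM⟩, rfl⟩
  refine ⟨hUnit, ?_⟩
  have hinv : (1 - T)⁻¹ = A := Matrix.inv_eq_right_inv hMA
  rw [hinv]
  have hrow : ∀ j : Fin h, A ⟨0, hh⟩ j = (d j)⁻¹ := by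
    intro j
    rw [hA]
    simp only [Matrix.of_apply]
    exact if_pos (Nat.zero_le _)
  simp_rw [hrow]
  have key : ∑ j : Fin h, (d j)⁻¹
      = ∑ j ∈ Finset.range h, ((1 : ℝ) - 2 ^ j / 2 ^ h)⁻¹ := by
    rw [Finset.sum_range fun j => ((1 : ℝ) - 2 ^ j / 2 ^ h)⁻¹]
  rw [key, ← Finset.sum_range_reflect (fun i => (2 : ℝ) ^ (i + 1) / (2 ^ (i + 1) - 1)) h]
  refine Finset.sum_congr rfl fun j hj => ?_
  rw [Finset.mem_range] at hj
  have hrw : h - 1 - j + 1 = h - j := by omega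
  rw [hrw]
  have hpow : (2 : ℝ) ^ (h - j) * 2 ^ j = 2 ^ h := by
    rw [← pow_add]; congr 1; omega
  have hne1 : (2 : ℝ) ^ (h - j) - 1 ≠ 0 := by
    have : (2:ℝ) ^ 1 ≤ 2 ^ (h - j) := pow_le_pow_right₀ (by norm_num) (by omega)
    simp at this; linarith
  have h2j : (2:ℝ) ^ j ≠ 0 := by positivity
  have h2hj : (2:ℝ) ^ (h - j) ≠ 0 := by positivity
  have hkey : (1:ℝ) - 2 ^ j / 2 ^ h = (2 ^ (h - j) - 1) / 2 ^ (h - j) := by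
    rw [← hpow]
    field_simp
  rw [hkey, inv_div]
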